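/- Let f: ℝ^n → ℝ be L-smooth and 1-weakly-quasi-convex with minimizer x*. Let (x^k) be generated by Algorithm AGMsDR started from x^0 (so that A_N f(x^N) ≤ min_x ψ_N(x), A_N ≥ N²/(4L), and the weakly-quasi-convex estimate holds). Then after N steps, f(x^N) − f(x*) ≤ 4L·V(x*, x^0)/N², where V(x*, x^0) = (1/2)‖x* − x^0‖₂². -/

import Mathlib

open scoped RealInnerProductSpace

/-- (Second half of Theorem 3 of the paper.) For an `L`-smooth,
`1`-weakly-quasi-convex `f` with minimizer `x*`, the AGMsDR guarantees
`A N * f (x N) ≤ min_x ψ N x` and `A N ≥ N²/(4L)` imply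
`f (x N) - f x* ≤ 4 L V(x*, x⁰) / N²` with `V(x*, x⁰) = (1/2)‖x* - x⁰‖²`. -/
theorem stmt_5 (n : ℕ) (L : ℝ) (hL : 0 < L)
    (f : EuclideanSpace ℝ (Fin n) → ℝ)
    (g : EuclideanSpace ℝ (Fin n) → EuclideanSpace ℝ (Fin n))
    (hdiff : ∀ z, HasGradientAt f (g z) z)
    (hlip : ∀ z w, ‖g z - g w‖ ≤ L * ‖z - w‖)
    (xstar : EuclideanSpace ℝ (Fin n)) (hstar : ∀ z, f xstar ≤ f z)
    (hwqc : ∀ z, f z - f xstar ≤ ⟪g z, z - xstar⟫)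
    (x y : ℕ → EuclideanSpace ℝ (Fin n)) (a A : ℕ → ℝ)
    (hapos : ∀ i, 0 < a (i + 1))
    (hA : ∀ k, A k = ∑ i ∈ Finset.range k, a (i + 1))
    (hψ : ∀ k (z : EuclideanSpace ℝ (Fin n)), A k * f (x k) ≤
      (1 / 2) * ‖z - x 0‖ ^ 2 +
        ∑ i ∈ Finset.range k, a (i + 1) * (f (y i) + ⟪g (y i), z - y i⟫))
    (hArate : ∀ k : ℕ, (k : ℝ) ^ 2 / (4 * L) ≤ A k)
    (N : ℕ) (hN : 0 < N) :
    f (x N) - f xstar ≤ 4 * L * ((1 / 2) * ‖xstar - x 0‖ ^ 2) / (N : ℝ) ^ 2 := by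
  set V : ℝ := (1 / 2) * ‖xstar - x 0‖ ^ 2 with hV
  have hNpos : (0 : ℝ) < (N : ℝ) ^ 2 := by positivity
  have hANpos : 0 < A N := lt_of_lt_of_le (by positivity) (hArate N)
  -- sum bound
  have hsum : ∑ i ∈ Finset.range N, a (i + 1) * (f (y i) + ⟪g (y i), xstar - y i⟫)
      ≤ A N * f xstar := by
    rw [hA N, Finset.sum_mul]
    apply Finset.sum_le_sum
    intro i _
    have h1 := hwqc (y i)
    have h2 : ⟪g (y i), xstar - y i⟫ = -⟪g (y i), y i - xstar⟫ := by
      rw [← inner_neg_right]; congr 1; abel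
    have : f (y i) + ⟪g (y i), xstar - y i⟫ ≤ f xstar := by
      rw [h2]; linarith
    exact mul_le_mul_of_nonneg_left this (hapos i).le
  have hmain : A N * (f (x N) - f xstar) ≤ V := by
    have := hψ N xstar
    nlinarith [this, hsum]
  have hVpos : 0 ≤ V := by positivity
  have step1 : f (x N) - f xstar ≤ V / A N :=
    (le_div_iff₀ hANpos).mpr (by linarith [mul_comm (A N) (f (x N) - f xstar) ▸ hmain,
      hmain])
  have step2 : V / A N ≤ V / ((N : ℝ) ^ 2 / (4 * L)) :=
    div_le_div_of_nonneg_left hVpos (by positivity) (hArate N)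
  have step3 : V / ((N : ℝ) ^ 2 / (4 * L)) = 4 * L * V / (N : ℝ) ^ 2 := by
    field_simp
  linarith [step1, step2, step3.le]
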